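/- Let U be a nonempty finite type, n a natural number, g : U → ℝⁿ and h : U → ℝ, and let γ denote the standard Gaussian measure on ℝⁿ (the n-fold product of the standard Gaussian measure on ℝ). Define F : ℝⁿ → ℝ by F(θ) = ∫ max_{u ∈ U} (⟨θ + z, g(u)⟩ + h(u)) dγ(z). Then F is differentiable on ℝⁿ. -/

import Mathlib

open MeasureTheory ProbabilityTheory
open scoped NNReal ENNReal Real

private lemma gauss_abs_integrable : Integrable (fun x : ℝ => |x|) (gaussianReal 0 1) := by
  rw [gaussianReal_of_var_ne_zero 0 one_ne_zero, integrable_withDensity_iff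
    (measurable_gaussianPDF 0 1) (Filter.Eventually.of_forall fun x => ENNReal.ofReal_lt_top)]
  have h : Integrable (fun x : ℝ => x ^ (1:ℝ) * Real.exp (-(2⁻¹ : ℝ) * x ^ 2)) volume :=
    integrable_rpow_mul_exp_neg_mul_sq (by norm_num) (by norm_num)
  have h2 := h.abs.const_mul ((Real.sqrt (2 * Real.pi))⁻¹)
  apply h2.congr
  refine Filter.Eventually.of_forall fun x => ?_
  simp only [gaussianPDF_def]
  rw [ENNReal.toReal_ofReal (gaussianPDFReal_nonneg _ _ _)]
  simp only [gaussianPDFReal, Real.rpow_one, abs_mul, abs_of_nonneg (Real.exp_pos _).le,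
    NNReal.coe_one, mul_one, sub_zero]
  ring_nf

private lemma pi_ac : ∀ (n : ℕ) (μ ν : Fin n → Measure ℝ), (∀ i, IsProbabilityMeasure (μ i)) →
    (∀ i, SigmaFinite (ν i)) → (∀ i, μ i ≪ ν i) → Measure.pi μ ≪ Measure.pi ν
  | 0, μ, ν, _, _, _ => by
      rw [Measure.pi_of_empty, Measure.pi_of_empty]
  | (n+1), μ, ν, hμ, hν, h => by
      haveI := hμ; haveI := hν
      haveI : ∀ i, SigmaFinite (μ i) := fun i => inferInstance
      have h1 := (MeasureTheory.measurePreserving_piFinSuccAbove μ 0).symm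
      have h2 := (MeasureTheory.measurePreserving_piFinSuccAbove ν 0).symm
      rw [← h1.map_eq, ← h2.map_eq]
      refine Measure.AbsolutelyContinuous.map ?_ (MeasurableEquiv.measurable _)
      exact (h 0).prod (pi_ac n _ _ (fun j => hμ _) (fun j => hν _) (fun j => h _))

private lemma map_eval_pi {n : ℕ} (μ : Fin n → Measure ℝ) [∀ i, IsProbabilityMeasure (μ i)]
    (i : Fin n) : (Measure.pi μ).map (Function.eval i) = μ i := by
  refine Measure.ext fun s hs => ?_
  rw [Measure.map_apply (measurable_pi_apply i) hs, Set.eval_preimage, Measure.pi_pi]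
  rw [Finset.prod_eq_single i (fun j _ hj => by simp [Function.update_of_ne hj]) (by simp)]
  simp

private lemma hyper_null {n : ℕ} (w : Fin n → ℝ) (hw : w ≠ 0) (c : ℝ) :
    (Measure.pi fun _ : Fin n => gaussianReal 0 1) {z | ∑ i, z i * w i = c} = 0 := by
  have hac : (Measure.pi fun _ : Fin n => gaussianReal 0 1) ≪ (volume : Measure (Fin n → ℝ)) := by
    rw [volume_pi]
    exact pi_ac n _ _ (fun _ => inferInstance) (fun _ => inferInstance)
      (fun _ => gaussianReal_absolutelyContinuous 0 one_ne_zero)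
  refine hac ?_
  set L : (Fin n → ℝ) →ₗ[ℝ] ℝ :=
    { toFun := fun z => ∑ i, z i * w i,
      map_add' := fun x y => by
        simp only [Pi.add_apply, add_mul]
        rw [Finset.sum_add_distrib]
      map_smul' := fun r x => by
        simp only [Pi.smul_apply, smul_eq_mul, RingHom.id_apply, Finset.mul_sum, mul_assoc] }
    with hLdef
  have hLapp : ∀ z, L z = ∑ i, z i * w i := fun z => rfl
  obtain ⟨i₀, hi₀⟩ : ∃ i, w i ≠ 0 := by
    by_contra hcon; push_neg at hcon; exact hw (funext hcon)
  have hker : LinearMap.ker L ≠ ⊤ := by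
    intro htop
    have hmem : Pi.single i₀ (1:ℝ) ∈ LinearMap.ker L := htop ▸ Submodule.mem_top
    rw [LinearMap.mem_ker, hLapp] at hmem
    rw [Finset.sum_eq_single i₀ (fun j _ hj => by rw [Pi.single_eq_of_ne hj]; ring)
      (by simp)] at hmem
    rw [Pi.single_eq_same, one_mul] at hmem
    exact hi₀ hmem
  by_cases hc : ∃ z₀ : Fin n → ℝ, ∑ i, z₀ i * w i = c
  · obtain ⟨z₀, hz₀⟩ := hc
    have hset : {z : Fin n → ℝ | ∑ i, z i * w i = c}
        = (fun z => z + (-z₀)) ⁻¹' (LinearMap.ker L : Set (Fin n → ℝ)) := by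
      ext z
      simp only [Set.mem_setOf_eq, Set.mem_preimage, SetLike.mem_coe, LinearMap.mem_ker, hLapp]
      have hsplit : ∑ i, (z + -z₀) i * w i = (∑ i, z i * w i) - ∑ i, z₀ i * w i := by
        rw [← Finset.sum_sub_distrib]
        exact Finset.sum_congr rfl fun i _ => by simp only [Pi.add_apply, Pi.neg_apply]; ring
      rw [hsplit, hz₀, sub_eq_zero]
    rw [hset, measure_preimage_add_right]
    exact Measure.addHaar_submodule _ _ hker
  · push_neg at hc
    have hempty : {z : Fin n → ℝ | ∑ i, z i * w i = c} = ∅ :=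
      Set.eq_empty_iff_forall_notMem.2 fun z hz => hc z hz
    simp [hempty]

/-- Smoothing effect of the Gaussian perturbation used in the Fenchel-Young loss: the
Gaussian average `F(θ) = ∫ max_{u ∈ U} (⟨θ + z, g(u)⟩ + h(u)) dγ(z)` of the piecewise
affine value function is differentiable everywhere on `ℝⁿ`, where `γ` is the standard
Gaussian measure on `ℝⁿ`. -/
theorem stmt_11 {U : Type*} [Fintype U] [Nonempty U] (n : ℕ)
    (g : U → (Fin n → ℝ)) (h : U → ℝ)
    (F : (Fin n → ℝ) → ℝ)
    (hF : ∀ θ : Fin n → ℝ,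
      F θ = ∫ z : Fin n → ℝ,
        (Finset.univ.sup' Finset.univ_nonempty
          fun u : U => (∑ i, (θ i + z i) * g u i) + h u)
        ∂(Measure.pi fun _ : Fin n => gaussianReal 0 1)) :
    Differentiable ℝ F := by
  classical
  set γ : Measure (Fin n → ℝ) := Measure.pi fun _ : Fin n => gaussianReal 0 1 with hγ
  haveI : IsProbabilityMeasure γ := by rw [hγ]; infer_instance
  set a : U → (Fin n → ℝ) → ℝ := fun u y => (∑ i, y i * g u i) + h u with hadef
  set f : (Fin n → ℝ) → ℝ :=
    fun y => Finset.univ.sup' Finset.univ_nonempty fun u => a u y with hfdef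
  have hFf : F = fun θ => ∫ z, f (θ + z) ∂γ := funext fun θ => hF θ
  set K : ℝ≥0 := ∑ u : U, ∑ i, ‖g u i‖₊ with hKdef
  have hKc : ∀ u : U, (∑ i, |g u i|) ≤ (K : ℝ) := by
    intro u
    have hKeq : (K:ℝ) = ∑ v : U, ∑ i, |g v i| := by
      rw [hKdef]; push_cast; simp [Real.norm_eq_abs]
    rw [hKeq]
    exact Finset.single_le_sum (f := fun v : U => ∑ i, |g v i|)
      (fun v _ => Finset.sum_nonneg fun i _ => abs_nonneg _) (Finset.mem_univ u)
  have hsub : ∀ u (y y' : Fin n → ℝ), a u y - a u y' = ∑ i, (y i - y' i) * g u i := by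
    intro u y y'
    rw [hadef]
    simp only []
    rw [add_sub_add_right_eq_sub, ← Finset.sum_sub_distrib]
    exact Finset.sum_congr rfl fun i _ => (sub_mul _ _ _).symm
  have haL : ∀ u, LipschitzWith K (a u) := by
    intro u
    refine LipschitzWith.of_dist_le_mul fun y y' => ?_
    rw [Real.dist_eq, hsub]
    calc |∑ i, (y i - y' i) * g u i| ≤ ∑ i, |(y i - y' i) * g u i| :=
          Finset.abs_sum_le_sum_abs _ _
      _ ≤ ∑ i, dist y y' * |g u i| := by
          refine Finset.sum_le_sum fun i _ => ?_
          rw [abs_mul]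
          exact mul_le_mul_of_nonneg_right
            (by rw [← Real.dist_eq]; exact dist_le_pi_dist y y' i) (abs_nonneg _)
      _ = (∑ i, |g u i|) * dist y y' := by rw [← Finset.mul_sum, mul_comm]
      _ ≤ (K:ℝ) * dist y y' := mul_le_mul_of_nonneg_right (hKc u) dist_nonneg
  have hfle : ∀ y y', f y ≤ f y' + K * dist y y' := by
    intro y y'
    refine Finset.sup'_le _ _ fun u _ => ?_
    have h1 : a u y ≤ a u y' + K * dist y y' := by
      have h2 := (haL u).dist_le_mul y y'
      rw [Real.dist_eq] at h2
      have h3 := le_abs_self (a u y - a u y')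
      linarith
    refine h1.trans ?_
    have h4 : a u y' ≤ f y' := Finset.le_sup' (fun u => a u y') (Finset.mem_univ u)
    linarith
  have hfL : LipschitzWith K f := by
    refine LipschitzWith.of_dist_le_mul fun y y' => ?_
    rw [Real.dist_eq, abs_sub_le_iff]
    constructor
    · have := hfle y y'; linarith
    · have h5 := hfle y' y; rw [dist_comm] at h5; linarith
  have haDiff : ∀ u, Differentiable ℝ (a u) := by
    intro u
    apply Differentiable.add_const
    exact Differentiable.fun_sum fun i _ =>
      ((ContinuousLinearMap.proj i : (Fin n → ℝ) →L[ℝ] ℝ).differentiable).mul_const _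
  have hfdiff : ∀ y : Fin n → ℝ,
      (∀ u v : U, g u ≠ g v → a u y ≠ a v y) → DifferentiableAt ℝ f y := by
    intro y hy
    obtain ⟨u₀, -, hu₀⟩ := Finset.exists_mem_eq_sup' (Finset.univ_nonempty (α := U))
      fun u : U => a u y
    have hloc : ∀ u : U, ∀ᶠ y' in nhds y, a u y' ≤ a u₀ y' := by
      intro u
      have hle : a u y ≤ a u₀ y := by
        have := Finset.le_sup' (fun u : U => a u y) (Finset.mem_univ u)
        rw [hu₀] at this; exact this
      rcases eq_or_lt_of_le hle with heq | hlt
      · by_cases hgu : g u = g u₀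
        · have hh : h u = h u₀ := by
            have h6 : (∑ i, y i * g u i) + h u = (∑ i, y i * g u₀ i) + h u₀ := heq
            rw [hgu] at h6
            linarith
          refine Filter.Eventually.of_forall fun y' => le_of_eq ?_
          show (∑ i, y' i * g u i) + h u = (∑ i, y' i * g u₀ i) + h u₀
          rw [hgu, hh]
        · exact absurd heq (hy u u₀ hgu)
      · exact ((haL u).continuous.continuousAt.eventually_lt
          (haL u₀).continuous.continuousAt hlt).mono fun _ hlt' => hlt'.le
    have hEvEq : f =ᶠ[nhds y] a u₀ := by
      refine (Filter.eventually_all.2 hloc).mono fun y' hy' => ?_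
      exact le_antisymm (Finset.sup'_le _ _ fun u _ => hy' u)
        (Finset.le_sup' (fun u : U => a u y') (Finset.mem_univ u₀))
    exact (haDiff u₀ y).congr_of_eventuallyEq hEvEq
  have hae : ∀ θ₀ : Fin n → ℝ,
      ∀ᵐ z ∂γ, ∀ u v : U, g u ≠ g v → a u (θ₀ + z) ≠ a v (θ₀ + z) := by
    intro θ₀
    refine ae_all_iff.2 fun u => ae_all_iff.2 fun v => ?_
    by_cases hguv : g u = g v
    · exact Filter.Eventually.of_forall fun z hne => absurd hguv hne
    · have hwne : (fun i => g u i - g v i) ≠ 0 := by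
        intro h0
        refine hguv (funext fun i => ?_)
        have := congrFun h0 i
        simpa [sub_eq_zero] using this
      have hnull := hyper_null (fun i => g u i - g v i) hwne
        (h v - h u - ∑ i, θ₀ i * (g u i - g v i))
      rw [ae_iff]
      rw [← hγ] at hnull
      refine measure_mono_null ?_ hnull
      intro z hz
      simp only [Set.mem_setOf_eq, not_forall, not_not] at hz ⊢
      have heq : a u (θ₀ + z) = a v (θ₀ + z) := hz.2
      have heq' : (∑ i, (θ₀ i + z i) * g u i) + h u
          = (∑ i, (θ₀ i + z i) * g v i) + h v := heq
      have hexp : ∑ i, z i * (g u i - g v i)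
          = (∑ i, (θ₀ i + z i) * g u i) - (∑ i, (θ₀ i + z i) * g v i)
            - ∑ i, θ₀ i * (g u i - g v i) := by
        rw [← Finset.sum_sub_distrib, ← Finset.sum_sub_distrib]
        refine Finset.sum_congr rfl fun i _ => by ring
      rw [hexp]
      linarith
  rw [hFf]
  intro θ₀
  have hmeas : ∀ x : Fin n → ℝ, AEStronglyMeasurable (fun z => f (x + z)) γ :=
    fun x => ((hfL.continuous).comp (continuous_const.add continuous_id)).aestronglyMeasurable
  have hcoord : ∀ i : Fin n, Integrable (fun z : Fin n → ℝ => |z i|) γ := by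
    intro i
    have hmap := map_eval_pi (fun _ : Fin n => gaussianReal 0 1) i
    have hInt : Integrable (fun x : ℝ => |x|) (γ.map (Function.eval i)) := by
      rw [hγ, hmap]; exact gauss_abs_integrable
    exact (integrable_map_measure measurable_abs.aestronglyMeasurable
      (measurable_pi_apply i).aemeasurable).1 hInt
  have hint : Integrable (fun z => f (θ₀ + z)) γ := by
    have hbound : Integrable (fun z : Fin n → ℝ => |f θ₀| + (K:ℝ) * ∑ i, |z i|) γ :=
      (integrable_const _).add
        (((integrable_finset_sum Finset.univ fun i _ => hcoord i)).const_mul _)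
    refine hbound.mono' (hmeas θ₀) (Filter.Eventually.of_forall fun z => ?_)
    have h1 : |f (θ₀ + z) - f θ₀| ≤ (K:ℝ) * dist (θ₀ + z) θ₀ := by
      rw [← Real.dist_eq]; exact hfL.dist_le_mul _ _
    have h2 : dist (θ₀ + z) θ₀ ≤ ∑ i, |z i| := by
      rw [dist_eq_norm, add_sub_cancel_left]
      refine (pi_norm_le_iff_of_nonneg (Finset.sum_nonneg fun i _ => abs_nonneg _)).2 fun i => ?_
      rw [Real.norm_eq_abs]
      exact Finset.single_le_sum (f := fun j => |z j|) (fun j _ => abs_nonneg _)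
        (Finset.mem_univ i)
    have hK0 : (0:ℝ) ≤ (K:ℝ) := K.coe_nonneg
    have h3 : (K:ℝ) * dist (θ₀ + z) θ₀ ≤ (K:ℝ) * ∑ i, |z i| :=
      mul_le_mul_of_nonneg_left h2 hK0
    have h4 := abs_sub_abs_le_abs_sub (f (θ₀ + z)) (f θ₀)
    have h5 : ‖f (θ₀ + z)‖ = |f (θ₀ + z)| := rfl
    rw [h5]
    have h6 : ‖|f θ₀| + (K:ℝ) * ∑ i, |z i|‖ = |f θ₀| + (K:ℝ) * ∑ i, |z i| := by
      rw [Real.norm_eq_abs, abs_of_nonneg]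
      positivity
    linarith
  have hmeas' : AEStronglyMeasurable (fun z => fderiv ℝ f (θ₀ + z)) γ :=
    (((measurable_fderiv ℝ f).comp (measurable_const.add measurable_id))).aestronglyMeasurable
  have hlip : ∀ᵐ z ∂γ, LipschitzOnWith (Real.nnabs ((K:ℝ)))
      (fun x => f (x + z)) (Metric.ball θ₀ 1) := by
    refine Filter.Eventually.of_forall fun z => ?_
    rw [Real.nnabs_coe]
    have hlw : LipschitzWith K (fun x => f (x + z)) := by
      refine LipschitzWith.of_dist_le_mul fun x y => ?_
      have := hfL.dist_le_mul (x + z) (y + z)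
      rwa [dist_add_right] at this
    exact hlw.lipschitzOnWith
  have hdiff : ∀ᵐ z ∂γ, HasFDerivAt (fun x => f (x + z)) (fderiv ℝ f (θ₀ + z)) θ₀ := by
    refine (hae θ₀).mono fun z hz => ?_
    have hd : DifferentiableAt ℝ f (θ₀ + z) := hfdiff _ hz
    have h1 : HasFDerivAt f (fderiv ℝ f (θ₀ + z)) (θ₀ + z) := hd.hasFDerivAt
    have h2 : HasFDerivAt (fun x : Fin n → ℝ => x + z)
        (ContinuousLinearMap.id ℝ (Fin n → ℝ)) θ₀ := (hasFDerivAt_id θ₀).add_const z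
    have h3 := h1.comp θ₀ h2
    simpa [Function.comp_def] using h3
  have key := hasFDerivAt_integral_of_dominated_loc_of_lip
    (μ := γ) (F := fun (x : Fin n → ℝ) (z : Fin n → ℝ) => f (x + z))
    (F' := fun z => fderiv ℝ f (θ₀ + z)) (x₀ := θ₀) (bound := fun _ => (K:ℝ)) (s := Metric.ball θ₀ 1)
    (Metric.ball_mem_nhds θ₀ one_pos) (Filter.Eventually.of_forall hmeas) hint hmeas' hlip (integrable_const _) hdiff
  exact key.2.differentiableAt
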